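/- Let w be a real root of w^4 − w − 1 = 0 and set x = −w^3 − 2w^2. Then the sequence s_n := U_{n−1}(w^{−3/2}/2) · w^{(n−1)(n+1)/2} (where U is the Chebyshev polynomial of the second kind) satisfies s_0 = 0, s_1 = 1, s_2 = 1, s_3 = −1, s_4 = x, and the Somos-4 relation s_n s_{n−4} = s_{n−1} s_{n−3} + s_{n−2}^2 for all n where s_{n−4} ≠ 0. -/

import Mathlib

/-- For `w` the positive real root of `w⁴ = w + 1` and `x = -w³ - 2w²`, the sequence
`s n = U_{n-1}(w^{-3/2}/2) · w^{(n-1)(n+1)/2}` (Chebyshev `U` of the second kind)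
has initial values `0, 1, 1, -1, x` and satisfies the Somos-4 relation wherever the
divisor is nonzero. -/
theorem somos4oid_chebyshev_closed_form (w : ℝ) (hw : w ^ 4 = w + 1) (hw0 : 0 < w)
    (x : ℝ) (hx : x = -w ^ 3 - 2 * w ^ 2) (s : ℤ → ℝ)
    (hs : ∀ n : ℤ, s n = (Polynomial.Chebyshev.U ℝ (n - 1)).eval (w ^ (-(3 : ℝ) / 2) / 2)
      * w ^ ((((n : ℝ) - 1) * ((n : ℝ) + 1)) / 2)) :
    s 0 = 0 ∧ s 1 = 1 ∧ s 2 = 1 ∧ s 3 = -1 ∧ s 4 = x ∧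
    (∀ n : ℤ, s (n - 4) ≠ 0 →
      s n * s (n - 4) = s (n - 1) * s (n - 3) + s (n - 2) ^ 2) := by
  have hwne : w ≠ 0 := ne_of_gt hw0
  set c : ℝ := w ^ (-(3 : ℝ) / 2) with hc
  -- basic rpow facts
  have hcw : c ^ 2 * w ^ 3 = 1 := by
    rw [hc, ← Real.rpow_natCast (w ^ (-(3:ℝ)/2)) 2, ← Real.rpow_natCast w 3,
      ← Real.rpow_mul hw0.le, ← Real.rpow_add hw0]
    norm_num
  set u : ℤ → ℝ := fun k => (Polynomial.Chebyshev.U ℝ k).eval (c / 2) with hu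
  have hrec : ∀ k : ℤ, u (k + 2) = c * u (k + 1) - u k := by
    intro k
    simp only [hu, Polynomial.Chebyshev.U_add_two, Polynomial.eval_sub, Polynomial.eval_mul,
      Polynomial.eval_ofNat, Polynomial.eval_X]
    ring
  have step1 : ∀ k : ℤ, u (k + 2) * u k - u (k + 1) ^ 2 = u (k + 1) * u (k - 1) - u k ^ 2 := by
    intro k
    linear_combination (norm := ring_nf) u k * hrec k - u (k + 1) * hrec (k - 1)
  have step2 : ∀ k : ℤ, u (k + 3) * u (k - 1) - u (k + 2) * u k
      = u (k + 2) * u (k - 2) - u (k + 1) * u (k - 1) := by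
    intro k
    linear_combination (norm := ring_nf) u (k - 1) * hrec (k + 1) - u (k + 2) * hrec (k - 2)
  have hu0 : u 0 = 1 := by simp [hu]
  have hu1 : u 1 = c := by simp [hu]; ring
  have hu2 : u 2 = c ^ 2 - 1 := by
    simp [hu, Polynomial.Chebyshev.U_two]; ring
  have hun1 : u (-1) = 0 := by simp [hu]
  have hun2 : u (-2) = -1 := by simp [hu]
  have L1 : ∀ k : ℤ, u (k + 1) * u (k - 1) - u k ^ 2 = -1 := by
    intro k
    induction k using Int.induction_on with
    | zero => rw [show (0:ℤ) + 1 = 1 from rfl, show (0:ℤ) - 1 = -1 from rfl, hu1, hun1, hu0]; ring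
    | succ k ih => linear_combination (norm := ring_nf) step1 k + ih
    | pred k ih => linear_combination (norm := ring_nf) ih - step1 (-(k:ℤ) - 1)
  have L2 : ∀ k : ℤ, u (k + 2) * u (k - 2) - u (k + 1) * u (k - 1) = 1 - c ^ 2 := by
    intro k
    induction k using Int.induction_on with
    | zero => rw [show (0:ℤ) + 2 = 2 from rfl, show (0:ℤ) - 2 = -2 from rfl,
        show (0:ℤ) + 1 = 1 from rfl, show (0:ℤ) - 1 = -1 from rfl, hu2, hun2, hu1, hun1]; ring
    | succ k ih => linear_combination (norm := ring_nf) step2 k + ih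
    | pred k ih => linear_combination (norm := ring_nf) ih - step2 (-(k:ℤ) - 1)
  have key : ∀ k : ℤ, u (k + 2) * u (k - 2) * w ^ 4 = u (k + 1) * u (k - 1) * w + u k ^ 2 := by
    intro k
    have h1 := L1 k
    have h2 := L2 k
    have h3 : u (k + 2) * u (k - 2) = u k ^ 2 - c ^ 2 := by linear_combination h1 + h2
    linear_combination w ^ 4 * h3 - w * h1 + u k ^ 2 * hw - w * hcw
  refine ⟨?_, ?_, ?_, ?_, ?_, ?_⟩
  · rw [hs]; norm_num
  · rw [hs]; norm_num
  · -- s 2 = 1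
    rw [hs]
    norm_num
    rw [show (2:ℝ) * (c/2) = c from by ring, hc, ← Real.rpow_add hw0]
    norm_num
  · -- s 3 = -1
    rw [hs]
    norm_num
    have h2 : (Polynomial.Chebyshev.U ℝ 2).eval (c/2) = c ^ 2 - 1 := hu2
    rw [
      show (Polynomial.Chebyshev.U ℝ 2).eval (c/2) = c ^ 2 - 1 from hu2]
    linear_combination w * hcw - hw
  · -- s 4 = x
    rw [hs]
    norm_num
    have hu3 : (Polynomial.Chebyshev.U ℝ 3).eval (c/2) = c ^ 3 - 2 * c := by
      have h := hrec 1
      have h3 : ((1:ℤ) + 2) = 3 := by norm_num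
      have h1' : ((1:ℤ) + 1) = 2 := by norm_num
      rw [h3, h1'] at h
      have : u 3 = c * u 2 - u 1 := h
      rw [hu2, hu1] at this
      calc (Polynomial.Chebyshev.U ℝ 3).eval (c/2) = u 3 := rfl
        _ = c * (c^2 - 1) - c := this
        _ = c ^ 3 - 2 * c := by ring
    have A : c ^ 3 * w ^ ((15:ℝ)/2) = w ^ (3:ℕ) := by
      rw [hc, ← Real.rpow_natCast (w ^ (-(3:ℝ)/2)) 3, ← Real.rpow_mul hw0.le,
        ← Real.rpow_add hw0, ← Real.rpow_natCast w 3]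
      norm_num
    have B : c * w ^ ((15:ℝ)/2) = w ^ (6:ℕ) := by
      rw [hc, ← Real.rpow_add hw0, ← Real.rpow_natCast w 6]
      norm_num
    rw [hu3, hx]
    linear_combination A - 2 * B - 2 * w ^ 2 * hw
  · -- Somos-4 relation
    intro n _
    have key' : ∀ k : ℤ, (Polynomial.Chebyshev.U ℝ (k + 2)).eval (c/2)
        * (Polynomial.Chebyshev.U ℝ (k - 2)).eval (c/2) * w ^ 4
        = (Polynomial.Chebyshev.U ℝ (k + 1)).eval (c/2)
          * (Polynomial.Chebyshev.U ℝ (k - 1)).eval (c/2) * w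
          + (Polynomial.Chebyshev.U ℝ k).eval (c/2) ^ 2 := key
    have E1 : w ^ (((n:ℝ) - 1) * ((n:ℝ) + 1) / 2)
        * w ^ (((n:ℝ) - 4 - 1) * ((n:ℝ) - 4 + 1) / 2)
        = w ^ ((n:ℝ)^2 - 4*(n:ℝ) + 3) * w ^ (4:ℕ) := by
      rw [← Real.rpow_natCast w 4, ← Real.rpow_add hw0, ← Real.rpow_add hw0]
      congr 1; push_cast; ring
    have E2 : w ^ (((n:ℝ) - 1 - 1) * ((n:ℝ) - 1 + 1) / 2)
        * w ^ (((n:ℝ) - 3 - 1) * ((n:ℝ) - 3 + 1) / 2)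
        = w ^ ((n:ℝ)^2 - 4*(n:ℝ) + 3) * w := by
      rw [← Real.rpow_add hw0,
        show ((n:ℝ)-1-1)*((n:ℝ)-1+1)/2 + ((n:ℝ)-3-1)*((n:ℝ)-3+1)/2
          = ((n:ℝ)^2-4*(n:ℝ)+3) + 1 from by ring,
        Real.rpow_add hw0, Real.rpow_one]
    have E3 : w ^ (((n:ℝ) - 2 - 1) * ((n:ℝ) - 2 + 1) / 2)
        * w ^ (((n:ℝ) - 2 - 1) * ((n:ℝ) - 2 + 1) / 2)
        = w ^ ((n:ℝ)^2 - 4*(n:ℝ) + 3) := by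
      rw [← Real.rpow_add hw0]
      congr 1; ring
    rw [hs n, hs (n-1), hs (n-2), hs (n-3), hs (n-4)]
    push_cast
    linear_combination (norm := ring_nf)
      ((Polynomial.Chebyshev.U ℝ (n-1)).eval (c/2)
        * (Polynomial.Chebyshev.U ℝ (n-5)).eval (c/2)) * E1
      - ((Polynomial.Chebyshev.U ℝ (n-2)).eval (c/2)
        * (Polynomial.Chebyshev.U ℝ (n-4)).eval (c/2)) * E2
      - ((Polynomial.Chebyshev.U ℝ (n-3)).eval (c/2)) ^ 2 * E3
      + w ^ ((n:ℝ)^2 - 4*(n:ℝ) + 3) * key' (n - 3)
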